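/- Let G be a graph on k ≥ 1 vertices and G' a graph on k' ≥ 1 vertices, and let G ∧ G' denote their disjoint union (on k + k' vertices). If P(G, n)/C(n, k) → a, P(G', n)/C(n, k') → b, and P(G ∧ G', n)/C(n, k+k') → c as n → ∞, then c ≥ ((k+k')! · k^k · k'^{k'} / (k! · k'! · (k+k')^{k+k'})) · a · b. -/

import Mathlib

open Classical in
/-- Number of `k`-element vertex subsets of `G` whose induced subgraph is isomorphic to `H`,
where `k` is the number of vertices of `H`. -/
noncomputable def inducedCount {α β : Type*} [Fintype α] [Fintype β]
    (H : SimpleGraph α) (G : SimpleGraph β) : ℕ :=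
  (Finset.univ.filter fun S : Finset β =>
    S.card = Fintype.card α ∧ Nonempty ((G.induce (S : Set β)) ≃g H)).card

/-- The maximum of `inducedCount H G` over all graphs `G` on `n` vertices. -/
noncomputable def maxInducedCount {α : Type*} [Fintype α] (H : SimpleGraph α) (n : ℕ) : ℕ :=
  sSup {m | ∃ G : SimpleGraph (Fin n), inducedCount H G = m}

open Finset Filter

section Aux

lemma choose_div_pow_tendsto (s : ℕ) :
    Tendsto (fun n : ℕ => (n.choose s : ℝ) / (n : ℝ) ^ s) atTop
      (nhds (1 / (s.factorial : ℝ))) := by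
  have key : Tendsto (fun n : ℕ => (∏ i ∈ Finset.range s, (1 - (i : ℝ) / n)) / (s.factorial : ℝ))
      atTop (nhds (1 / (s.factorial : ℝ))) := by
    have h1 : Tendsto (fun n : ℕ => ∏ i ∈ Finset.range s, (1 - (i : ℝ) / n)) atTop (nhds 1) := by
      have h2 : Tendsto (fun n : ℕ => ∏ i ∈ Finset.range s, (1 - (i : ℝ) / n)) atTop
          (nhds (∏ _i ∈ Finset.range s, (1 : ℝ))) := by
        apply tendsto_finset_prod
        intro i _
        simpa using tendsto_const_nhds.sub
          (Filter.Tendsto.div_atTop (tendsto_const_nhds (x := (i : ℝ)))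
            tendsto_natCast_atTop_atTop)
      simpa using h2
    simpa using h1.div_const (s.factorial : ℝ)
  apply key.congr'
  filter_upwards [eventually_ge_atTop s, eventually_ge_atTop 1] with n hns hn1
  have hn0 : (n : ℝ) ≠ 0 := Nat.cast_ne_zero.mpr (by omega)
  have hd : ((n.descFactorial s : ℕ) : ℝ) = ∏ i ∈ Finset.range s, ((n : ℝ) - i) := by
    rw [Nat.descFactorial_eq_prod_range, Nat.cast_prod]
    refine Finset.prod_congr rfl fun i hi => ?_
    have : i ≤ n := le_trans (Finset.mem_range.mp hi).le hns
    push_cast [Nat.cast_sub this]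
    ring
  have hsf : (s.factorial : ℝ) ≠ 0 := Nat.cast_ne_zero.mpr s.factorial_ne_zero
  have hc : (n.choose s : ℝ) = (∏ i ∈ Finset.range s, ((n : ℝ) - i)) / (s.factorial : ℝ) := by
    rw [← hd, eq_div_iff hsf]
    rw [mul_comm]
    exact_mod_cast (Nat.descFactorial_eq_factorial_mul_choose n s).symm
  have hprod : ∏ i ∈ Finset.range s, (1 - (i : ℝ) / n)
      = (∏ i ∈ Finset.range s, ((n : ℝ) - i)) / (n : ℝ) ^ s := by
    have h3 : ∀ i ∈ Finset.range s, (1 - (i : ℝ) / n) = ((n : ℝ) - i) / n := by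
      intro i _
      rw [sub_div, div_self hn0]
    rw [Finset.prod_congr rfl h3, Finset.prod_div_distrib, Finset.prod_const, Finset.card_range]
  rw [hprod, hc, div_div, div_div, mul_comm]

lemma choose_mul_div_tendsto (r s : ℕ) (hr : 1 ≤ r) :
    Tendsto (fun t : ℕ => ((r * t).choose s : ℝ) / (t : ℝ) ^ s) atTop
      (nhds ((r : ℝ) ^ s / (s.factorial : ℝ))) := by
  have hcomp : Tendsto (fun t : ℕ => r * t) atTop atTop :=
    tendsto_atTop_mono (fun t => Nat.le_mul_of_pos_left t hr) tendsto_id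
  have h := ((choose_div_pow_tendsto s).comp hcomp).mul_const ((r : ℝ) ^ s)
  have hlim : 1 / (s.factorial : ℝ) * (r : ℝ) ^ s = (r : ℝ) ^ s / (s.factorial : ℝ) := by ring
  rw [hlim] at h
  apply h.congr'
  filter_upwards [eventually_ge_atTop 1] with t ht
  have ht0 : (t : ℝ) ≠ 0 := Nat.cast_ne_zero.mpr (by omega)
  have hr0 : (r : ℝ) ≠ 0 := Nat.cast_ne_zero.mpr (by omega)
  show ((r * t).choose s : ℝ) / ((r * t : ℕ) : ℝ) ^ s * (r : ℝ) ^ s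
      = ((r * t).choose s : ℝ) / (t : ℝ) ^ s
  push_cast
  rw [mul_pow]
  field_simp

/-- Induced subgraph along a host isomorphism. -/
noncomputable def induceMapIso {β γ : Type*} {G₁ : SimpleGraph β} {G₂ : SimpleGraph γ}
    (e : G₁ ≃g G₂) (S : Finset β) :
    G₂.induce ((S.map e.toEquiv.toEmbedding : Finset γ) : Set γ) ≃g G₁.induce (S : Set β) where
  toEquiv := (e.toEquiv.subtypeEquiv fun a => by
    simp [Finset.mem_map_equiv]).symm
  map_rel_iff' := by
    rintro ⟨x, hx⟩ ⟨y, hy⟩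
    exact e.symm.map_adj_iff

lemma inducedCount_le_of_iso {α β γ : Type*} [Fintype α] [Fintype β] [Fintype γ]
    (H : SimpleGraph α) {G₁ : SimpleGraph β} {G₂ : SimpleGraph γ} (e : G₁ ≃g G₂) :
    inducedCount H G₁ ≤ inducedCount H G₂ := by
  classical
  unfold inducedCount
  apply Finset.card_le_card_of_injOn (fun S => S.map e.toEquiv.toEmbedding)
  · intro S hS
    simp only [Finset.mem_coe, Finset.mem_filter, Finset.mem_univ, true_and] at hS ⊢
    obtain ⟨hcard, ⟨f⟩⟩ := hS
    exact ⟨by rw [Finset.card_map]; exact hcard, ⟨f.comp (induceMapIso e S)⟩⟩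
  · intro S _ T _ h
    exact Finset.map_injective _ h

lemma inducedCount_iso {α β γ : Type*} [Fintype α] [Fintype β] [Fintype γ]
    (H : SimpleGraph α) {G₁ : SimpleGraph β} {G₂ : SimpleGraph γ} (e : G₁ ≃g G₂) :
    inducedCount H G₁ = inducedCount H G₂ :=
  le_antisymm (inducedCount_le_of_iso H e) (inducedCount_le_of_iso H e.symm)

/-- Iso of disjoint sums from isos of the parts. -/
noncomputable def sumMapIso {α α' γ γ' : Type*}
    {G₁ : SimpleGraph γ} {G₂ : SimpleGraph γ'} {H₁ : SimpleGraph α} {H₂ : SimpleGraph α'}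
    (f : G₁ ≃g H₁) (g : G₂ ≃g H₂) : G₁ ⊕g G₂ ≃g H₁ ⊕g H₂ where
  toEquiv := Equiv.sumCongr f.toEquiv g.toEquiv
  map_rel_iff' := by
    rintro (u | u) (v | v) <;>
      simp [SimpleGraph.sum_adj, f.map_adj_iff, g.map_adj_iff]

/-- The graph induced on a disjoint sum of vertex sets is the disjoint sum of induced graphs. -/
noncomputable def disjSumInduceIso {β β' : Type*} (A : SimpleGraph β) (B : SimpleGraph β')
    (S : Finset β) (T : Finset β') :
    (A ⊕g B).induce ((S.disjSum T : Finset (β ⊕ β')) : Set (β ⊕ β')) ≃g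
      (A.induce (S : Set β)) ⊕g (B.induce (T : Set β')) where
  toEquiv :=
    { toFun := fun x => match x with
        | ⟨Sum.inl a, h⟩ => Sum.inl ⟨a, by simpa using h⟩
        | ⟨Sum.inr b, h⟩ => Sum.inr ⟨b, by simpa using h⟩
      invFun := fun y => match y with
        | Sum.inl a => ⟨Sum.inl a.1, by simpa using a.2⟩
        | Sum.inr b => ⟨Sum.inr b.1, by simpa using b.2⟩
      left_inv := by rintro ⟨a | b, h⟩ <;> rfl
      right_inv := by rintro (⟨a, h⟩ | ⟨b, h⟩) <;> rfl }
  map_rel_iff' := by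
    rintro ⟨a | b, ha⟩ ⟨c | d, hc⟩ <;> exact Iff.rfl

lemma inducedCount_mul_le {α α' β β' : Type*} [Fintype α] [Fintype α'] [Fintype β] [Fintype β']
    (G : SimpleGraph α) (G' : SimpleGraph α') (A : SimpleGraph β) (B : SimpleGraph β') :
    inducedCount G A * inducedCount G' B ≤ inducedCount (G ⊕g G') (A ⊕g B) := by
  classical
  unfold inducedCount
  rw [← Finset.card_product]
  apply Finset.card_le_card_of_injOn (fun P => P.1.disjSum P.2)
  · rintro ⟨S, T⟩ hST
    simp only [Finset.mem_coe, Finset.mem_product, Finset.mem_filter, Finset.mem_univ, true_and] at hST ⊢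
    obtain ⟨⟨hS, ⟨f⟩⟩, hT, ⟨g⟩⟩ := hST
    constructor
    · rw [Finset.card_disjSum, hS, hT, Fintype.card_sum]
    · exact ⟨(sumMapIso f g).comp (disjSumInduceIso A B S T)⟩
  · rintro ⟨S, T⟩ _ ⟨S', T'⟩ _ h
    simp only [Finset.disjSum_inj] at h
    exact Prod.ext h.1 h.2

lemma inducedCount_le_max {α : Type*} [Fintype α] (H : SimpleGraph α) {n : ℕ}
    (Ω : SimpleGraph (Fin n)) : inducedCount H Ω ≤ maxInducedCount H n := by
  classical
  apply le_csSup
  · refine ⟨Fintype.card (Finset (Fin n)), ?_⟩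
    rintro m ⟨Gg, rfl⟩
    unfold inducedCount
    exact (Finset.card_filter_le _ _).trans (le_of_eq Finset.card_univ)
  · exact ⟨Ω, rfl⟩

lemma exists_inducedCount_eq_max {α : Type*} [Fintype α] (H : SimpleGraph α) (n : ℕ) :
    ∃ Ω : SimpleGraph (Fin n), inducedCount H Ω = maxInducedCount H n := by
  classical
  have hbdd : BddAbove {m | ∃ Gg : SimpleGraph (Fin n), inducedCount H Gg = m} := by
    refine ⟨Fintype.card (Finset (Fin n)), ?_⟩
    rintro m ⟨Gg, rfl⟩
    unfold inducedCount
    exact (Finset.card_filter_le _ _).trans (le_of_eq Finset.card_univ)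
  have h := Nat.sSup_mem (s := {m | ∃ Gg : SimpleGraph (Fin n), inducedCount H Gg = m})
    ⟨inducedCount H (⊥ : SimpleGraph (Fin n)), ⟨(⊥ : SimpleGraph (Fin n)), rfl⟩⟩ hbdd
  exact h

lemma max_mul_max_le {α β : Type*} [Fintype α] [Fintype β]
    (G : SimpleGraph α) (G' : SimpleGraph β) (m n : ℕ) :
    maxInducedCount G m * maxInducedCount G' n ≤ maxInducedCount (G ⊕g G') (m + n) := by
  obtain ⟨A, hA⟩ := exists_inducedCount_eq_max G m
  obtain ⟨B, hB⟩ := exists_inducedCount_eq_max G' n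
  let e : Fin (m + n) ≃ Fin m ⊕ Fin n := finSumFinEquiv.symm
  let Ω : SimpleGraph (Fin (m + n)) := (A ⊕g B).comap e
  have hiso : Ω ≃g A ⊕g B := ⟨e, Iff.rfl⟩
  calc maxInducedCount G m * maxInducedCount G' n
      = inducedCount G A * inducedCount G' B := by rw [hA, hB]
    _ ≤ inducedCount (G ⊕g G') (A ⊕g B) := inducedCount_mul_le G G' A B
    _ = inducedCount (G ⊕g G') Ω := (inducedCount_iso _ hiso).symm
    _ ≤ maxInducedCount (G ⊕g G') (m + n) := inducedCount_le_max _ Ω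

end Aux

/-- Pippenger–Golumbic, Theorem 6, conjunction case. For graphs `G` on
`k ≥ 1` vertices and `G'` on `k' ≥ 1` vertices, if the normalized maximum induced counts of
`G`, `G'` and their disjoint union `G ∧ G'` converge to `a`, `b`, `c` respectively, then
`c ≥ ((k+k')! k^k k'^{k'} / (k! k'! (k+k')^{k+k'})) · a · b`. -/
theorem inducibility_disjoint_union {α β : Type*} [Fintype α] [Fintype β]
    (G : SimpleGraph α) (G' : SimpleGraph β)
    (hk : 1 ≤ Fintype.card α) (hk' : 1 ≤ Fintype.card β) (a b c : ℝ)
    (ha : Filter.Tendsto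
      (fun n : ℕ => (maxInducedCount G n : ℝ) / (n.choose (Fintype.card α) : ℝ))
      Filter.atTop (nhds a))
    (hb : Filter.Tendsto
      (fun n : ℕ => (maxInducedCount G' n : ℝ) / (n.choose (Fintype.card β) : ℝ))
      Filter.atTop (nhds b))
    (hc : Filter.Tendsto
      (fun n : ℕ => (maxInducedCount (G ⊕g G') n : ℝ) /
        (n.choose (Fintype.card α + Fintype.card β) : ℝ))
      Filter.atTop (nhds c)) :
    ((Fintype.card α + Fintype.card β).factorial : ℝ) *
        (Fintype.card α : ℝ) ^ (Fintype.card α) * (Fintype.card β : ℝ) ^ (Fintype.card β) /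
        (((Fintype.card α).factorial : ℝ) * ((Fintype.card β).factorial : ℝ) *
          ((Fintype.card α + Fintype.card β : ℕ) : ℝ) ^
            (Fintype.card α + Fintype.card β)) * a * b ≤ c := by
  classical
  set k := Fintype.card α with hkdef
  set k' := Fintype.card β with hk'def
  have hK : 1 ≤ k + k' := le_trans hk (Nat.le_add_right _ _)
  have hmul : ∀ r : ℕ, 1 ≤ r → Filter.Tendsto (fun t : ℕ => r * t) Filter.atTop Filter.atTop :=
    fun r hr => tendsto_atTop_mono (fun t => Nat.le_mul_of_pos_left t hr) tendsto_id
  have ha' : Tendsto (fun t : ℕ =>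
      (maxInducedCount G (k * t) : ℝ) / ((k * t).choose k : ℝ)) atTop (nhds a) :=
    ha.comp (hmul k hk)
  have hb' : Tendsto (fun t : ℕ =>
      (maxInducedCount G' (k' * t) : ℝ) / ((k' * t).choose k' : ℝ)) atTop (nhds b) :=
    hb.comp (hmul k' hk')
  have hc' : Tendsto (fun t : ℕ =>
      (maxInducedCount (G ⊕g G') ((k + k') * t) : ℝ) /
        (((k + k') * t).choose (k + k') : ℝ)) atTop (nhds c) :=
    hc.comp (hmul (k + k') hK)
  have hu := choose_mul_div_tendsto k k hk
  have hv := choose_mul_div_tendsto k' k' hk'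
  have hw := choose_mul_div_tendsto (k + k') (k + k') hK
  have hKfac : (((k + k').factorial : ℕ) : ℝ) ≠ 0 :=
    Nat.cast_ne_zero.mpr (Nat.factorial_ne_zero _)
  have hkfac : ((k.factorial : ℕ) : ℝ) ≠ 0 := Nat.cast_ne_zero.mpr (Nat.factorial_ne_zero _)
  have hk'fac : ((k'.factorial : ℕ) : ℝ) ≠ 0 := Nat.cast_ne_zero.mpr (Nat.factorial_ne_zero _)
  have hKpos : (0 : ℝ) < ((k + k' : ℕ) : ℝ) := by
    have : (0 : ℕ) < k + k' := hK
    exact_mod_cast this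
  have hKpow : ((k + k' : ℕ) : ℝ) ^ (k + k') ≠ 0 := pow_ne_zero _ hKpos.ne'
  have hwne : ((k + k' : ℕ) : ℝ) ^ (k + k') / (((k + k').factorial : ℕ) : ℝ) ≠ 0 :=
    div_ne_zero hKpow hKfac
  set L : ℝ := ((k : ℝ) ^ k / (k.factorial : ℝ)) * ((k' : ℝ) ^ k' / (k'.factorial : ℝ)) /
      (((k + k' : ℕ) : ℝ) ^ (k + k') / (((k + k').factorial : ℕ) : ℝ)) with hLdef
  have hR : Tendsto (fun t : ℕ => ((k * t).choose k : ℝ) * ((k' * t).choose k' : ℝ) /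
      (((k + k') * t).choose (k + k') : ℝ)) atTop (nhds L) := by
    have h0 := (hu.mul hv).div hw hwne
    apply h0.congr'
    filter_upwards [eventually_ge_atTop 1] with t ht
    have ht0 : (t : ℝ) ≠ 0 := Nat.cast_ne_zero.mpr (by omega)
    have hC3 : ((((k + k') * t).choose (k + k') : ℕ) : ℝ) ≠ 0 := by
      have h1 : 0 < ((k + k') * t).choose (k + k') :=
        Nat.choose_pos (Nat.le_mul_of_pos_right _ ht)
      exact_mod_cast h1.ne'
    show ((k * t).choose k : ℝ) / (t : ℝ) ^ k * (((k' * t).choose k' : ℝ) / (t : ℝ) ^ k') /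
        ((((k + k') * t).choose (k + k') : ℝ) / (t : ℝ) ^ (k + k')) = _
    rw [pow_add]
    field_simp
  have hG := (ha'.mul hb').mul hR
  have hineq : ∀ᶠ t : ℕ in atTop,
      (maxInducedCount G (k * t) : ℝ) / ((k * t).choose k : ℝ) *
        ((maxInducedCount G' (k' * t) : ℝ) / ((k' * t).choose k' : ℝ)) *
        (((k * t).choose k : ℝ) * ((k' * t).choose k' : ℝ) /
          (((k + k') * t).choose (k + k') : ℝ)) ≤
      (maxInducedCount (G ⊕g G') ((k + k') * t) : ℝ) /
        (((k + k') * t).choose (k + k') : ℝ) := by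
    filter_upwards [eventually_ge_atTop 1] with t ht
    have hC1 : (0 : ℝ) < ((k * t).choose k : ℝ) := by
      exact_mod_cast Nat.choose_pos (Nat.le_mul_of_pos_right _ ht)
    have hC2 : (0 : ℝ) < ((k' * t).choose k' : ℝ) := by
      exact_mod_cast Nat.choose_pos (Nat.le_mul_of_pos_right _ ht)
    have hC3 : (0 : ℝ) < ((((k + k') * t).choose (k + k') : ℕ) : ℝ) := by
      exact_mod_cast Nat.choose_pos (Nat.le_mul_of_pos_right _ ht)
    have hstep : (maxInducedCount G (k * t) : ℝ) * (maxInducedCount G' (k' * t) : ℝ) ≤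
        (maxInducedCount (G ⊕g G') ((k + k') * t) : ℝ) := by
      have h := max_mul_max_le G G' (k * t) (k' * t)
      rw [← add_mul] at h
      exact_mod_cast h
    have heq : (maxInducedCount G (k * t) : ℝ) / ((k * t).choose k : ℝ) *
        ((maxInducedCount G' (k' * t) : ℝ) / ((k' * t).choose k' : ℝ)) *
        (((k * t).choose k : ℝ) * ((k' * t).choose k' : ℝ) /
          (((k + k') * t).choose (k + k') : ℝ)) =
        (maxInducedCount G (k * t) : ℝ) * (maxInducedCount G' (k' * t) : ℝ) /
          (((k + k') * t).choose (k + k') : ℝ) := by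
      field_simp
    rw [heq]
    gcongr
  have hfinal : a * b * L ≤ c := le_of_tendsto_of_tendsto hG hc' hineq
  have hconst : (((k + k').factorial : ℕ) : ℝ) * (k : ℝ) ^ k * (k' : ℝ) ^ k' /
      (((k.factorial : ℕ) : ℝ) * ((k'.factorial : ℕ) : ℝ) *
        ((k + k' : ℕ) : ℝ) ^ (k + k')) * a * b = a * b * L := by
    rw [hLdef]
    field_simp
  calc (((k + k').factorial : ℕ) : ℝ) * (k : ℝ) ^ k * (k' : ℝ) ^ k' /
      (((k.factorial : ℕ) : ℝ) * ((k'.factorial : ℕ) : ℝ) *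
        ((k + k' : ℕ) : ℝ) ^ (k + k')) * a * b = a * b * L := hconst
    _ ≤ c := hfinal
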